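/- Fix n ∈ ℕ and suppose Assumption 1 holds with support bound h. Let (B_k)_{k≥1} be a sequence of h-branching sequential persuasions starting from μ, B_k = (C_i, π_i^{(k)}, β_i^{(k)}, η_i^{(k)})_{i∈ℕ}, such that for every 0 ≤ i ≤ n−1, (η_i^{(k)})_{k≥1} pointwise weakly converges to some η_i: C_i → F, and for every 0 ≤ i ≤ n, (π_i^{(k)})_{k≥1} pointwise converges to some distribution π_i over C_i and (β_i^{(k)})_{k≥1} pointwise converges in total variation to some β_i: C_i → Δ(Ω). Then there exist a subsequence indexed by (k_l)_{l≥1}, a map η_n: C_n → F, a probability distribution π_{n+1} over C_{n+1}, and a map β_{n+1}: C_{n+1} → Δ(Ω) such that: (η_n^{(k_l)})_{l≥1} pointwise weakly converges to η_n; (π_{n+1}^{(k_l)})_{l≥1} pointwise converges to π_{n+1}; (β_{n+1}^{(k_l)})_{l≥1} pointwise converges in total variation to β_{n+1}; σ(η_n(c_{n,m})) = β_n(c_{n,m}) and τ(η_n(c_{n,m})) ⊆ {β_{n+1}(c) : c ∈ Γ(n,m)} for every 1 ≤ m ≤ h^n; and for every p assigned probability λ ≥ 0 by η_n(c_{n,m}),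 Σ_{c∈Γ(n,m)} 1[β_{n+1}(c) = p]·π_{n+1}(c) = π_n(c_{n,m})·λ. -/

import Mathlib

open Filter Topology
open scoped Classical

noncomputable section

/-- Δ(Ω): beliefs, i.e. probability distributions on the finite state space Ω,
as a subspace of Ω → ℝ (its topology agrees with the total-variation one). -/
abbrev Belief (Ω : Type*) [Fintype Ω] :=
  {p : Ω → ℝ // (∀ ω, 0 ≤ p ω) ∧ ∑ ω, p ω = 1}

variable {Ω : Type*} [Fintype Ω]

/-- An element of F₀: a finite-support experiment, i.e. a finitely supported probability
distribution over beliefs (keys are the distinct posteriors p_j, values the positive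
weights λ_j). -/
structure SPExp (Ω : Type*) [Fintype Ω] where
  w : Belief Ω →₀ ℝ
  nonneg : ∀ p, 0 ≤ w p
  sum_one : ∑ p ∈ w.support, w p = 1

namespace SPExp

/-- τ(e): the support of an experiment. -/
def tau (e : SPExp Ω) : Finset (Belief Ω) := e.w.support

/-- Expectation of a real-valued function under an experiment. -/
def expect (e : SPExp Ω) (f : Belief Ω → ℝ) : ℝ := ∑ p ∈ e.w.support, e.w p * f p

/-- σ(e): the barycenter (expectation) of an experiment. -/
def sigma (e : SPExp Ω) : Belief Ω :=
  ⟨fun ω => ∑ p ∈ e.w.support, e.w p * p.val ω,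
   fun ω => Finset.sum_nonneg fun p _ => mul_nonneg (e.nonneg p) (p.2.1 ω),
   by
     calc ∑ ω, ∑ p ∈ e.w.support, e.w p * p.val ω
         = ∑ p ∈ e.w.support, ∑ ω, e.w p * p.val ω := Finset.sum_comm
       _ = ∑ p ∈ e.w.support, e.w p * ∑ ω, p.val ω := by
           refine Finset.sum_congr rfl fun p _ => ?_
           rw [Finset.mul_sum]
       _ = ∑ p ∈ e.w.support, e.w p := by
           refine Finset.sum_congr rfl fun p _ => ?_
           rw [p.2.2, mul_one]
       _ = 1 := e.sum_one⟩

/-- The trivial experiment (1, p). -/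
def triv (p : Belief Ω) : SPExp Ω where
  w := Finsupp.single p 1
  nonneg := fun q => by
    rw [Finsupp.single_apply]
    split <;> norm_num
  sum_one := by
    rw [Finsupp.support_single_ne_zero _ one_ne_zero]
    simp

end SPExp

/-- T: the set of trivial experiments. -/
def Trivials (Ω : Type*) [Fintype Ω] : Set (SPExp Ω) := Set.range SPExp.triv

/-- Weak convergence of experiments, viewed as Borel probability measures on Δ(Ω). -/
def WeakTendsto (es : ℕ → SPExp Ω) (e : SPExp Ω) : Prop :=
  ∀ f : Belief Ω → ℝ, Continuous f →
    Tendsto (fun i => (es i).expect f) atTop (𝓝 (e.expect f))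

/-- Convergence of beliefs in total variation. -/
def TVTendsto (ps : ℕ → Belief Ω) (p : Belief Ω) : Prop :=
  Tendsto (fun i => ∑ ω, |(ps i).val ω - p.val ω|) atTop (𝓝 0)

/-- Histories, most recent step first: entries are (experiment taken, realized posterior);
the starting belief is kept separately. -/
abbrev Hist (Ω : Type*) [Fintype Ω] := List (SPExp Ω × Belief Ω)

/-- last(ξ): the current belief after history ξ started at μ. -/
def lastBelief (μ : Belief Ω) : Hist Ω → Belief Ω
  | [] => μ
  | (_, p) :: _ => p

/-- Pr[ξ]: the probability of a history. -/
def histProb : Hist Ω → ℝ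
  | [] => 1
  | (e, p) :: ξ => e.w p * histProb ξ

/-- A sequential persuasion starting from μ with feasible experiments F, given by its
history-dependent choice of the next (feasible, Bayes-plausible) experiment.  An n-step
sequential persuasion is such a strategy used for n steps; an infinite sequential
persuasion is the strategy itself. -/
structure SeqP {Ω : Type*} [Fintype Ω] (F : Set (SPExp Ω)) (μ : Belief Ω) where
  next : Hist Ω → SPExp Ω
  feasible : ∀ ξ, next ξ ∈ F
  bayes : ∀ ξ, (next ξ).sigma = lastBelief μ ξ

variable {F : Set (SPExp Ω)} {μ : Belief Ω}

/-- Expectation of g over the n-step histories of S extending ξ. -/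
def histExp (S : SeqP F μ) (g : Hist Ω → ℝ) : ℕ → Hist Ω → ℝ
  | 0, ξ => g ξ
  | n + 1, ξ => (S.next ξ).expect fun p => histExp S g n ((S.next ξ, p) :: ξ)

/-- Ξ_n: the set of n-step histories of S. -/
def Hists (S : SeqP F μ) : ℕ → Set (Hist Ω)
  | 0 => {[]}
  | n + 1 => {ξ' | ∃ ξ ∈ Hists S n, ∃ p ∈ (S.next ξ).tau, ξ' = (S.next ξ, p) :: ξ}

/-- ξ padded by l trivial steps. -/
def padHist (μ : Belief Ω) (ξ : Hist Ω) (l : ℕ) : Hist Ω :=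
  List.replicate l (SPExp.triv (lastBelief μ ξ), lastBelief μ ξ) ++ ξ

/-- S terminates after ξ: all subsequent choices (along trivial continuations of ξ)
are the trivial experiment. -/
def TerminatesAfter (S : SeqP F μ) (ξ : Hist Ω) : Prop :=
  ∀ l : ℕ, S.next (padHist μ ξ l) = SPExp.triv (lastBelief μ ξ)

/-- 𝒱(S⁽ⁿ⁾) = E[v(b_n)], the expected utility of the n-step persuasion given by the
first n steps of S. -/
def stepUtility (v : Belief Ω → ℝ) (S : SeqP F μ) (n : ℕ) : ℝ :=
  histExp S (fun ξ => v (lastBelief μ ξ)) n []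

/-- Pr[S terminates after n steps]. -/
def termProb (S : SeqP F μ) (n : ℕ) : ℝ :=
  histExp S (fun ξ => if TerminatesAfter S ξ then 1 else 0) n []

/-- 𝒱(S) for an infinite sequential persuasion S. -/
def infUtility (v : Belief Ω → ℝ) (S : SeqP F μ) : ℝ :=
  ⨆ n : ℕ, histExp S (fun ξ => if TerminatesAfter S ξ then v (lastBelief μ ξ) else 0) n []

/-- Pr[b_n ∈ O] for the belief b_n induced by S after n steps. -/
def massIn (S : SeqP F μ) (O : Set (Belief Ω)) (n : ℕ) : ℝ :=
  histExp S (fun ξ => if lastBelief μ ξ ∈ O then 1 else 0) n []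

/-- v_n(p): the optimal value over n-step sequential persuasions starting from p. -/
def vN (F : Set (SPExp Ω)) (v : Belief Ω → ℝ) (n : ℕ) (p : Belief Ω) : ℝ :=
  ⨆ S : SeqP F p, stepUtility v S n

/-- v_∞(p): the optimal value over infinite sequential persuasions starting from p. -/
def vInf (F : Set (SPExp Ω)) (v : Belief Ω → ℝ) (p : Belief Ω) : ℝ :=
  ⨆ S : SeqP F p, infUtility v S

/-- Assumption 1: a uniform support bound h, and weak closedness of F. -/
def Assumption1 (F : Set (SPExp Ω)) (h : ℕ) : Prop :=
  (∀ e ∈ F, e.tau.card ≤ h) ∧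
  ∀ es : ℕ → SPExp Ω, (∀ i, es i ∈ F) → ∀ e : SPExp Ω, WeakTendsto es e → e ∈ F

/-- Shannon entropy of a belief. -/
def entropy (p : Belief Ω) : ℝ := -∑ ω, p.val ω * Real.log (p.val ω)

/-- Assumption 2: every nontrivial feasible experiment lowers expected entropy by δ. -/
def Assumption2 (F : Set (SPExp Ω)) (δ : ℝ) : Prop :=
  ∀ e ∈ F \ Trivials Ω, e.expect entropy ≤ entropy e.sigma - δ

/-- S is (effectively) an n-step sequential persuasion: after n steps it only takes
trivial experiments. -/
def IsNStep (S : SeqP F μ) (n : ℕ) : Prop :=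
  ∀ ξ : Hist Ω, n ≤ ξ.length → S.next ξ = SPExp.triv (lastBelief μ ξ)

/-- Assumption 3 at prior μ: a sequence of finite-step sequential persuasions whose
values tend to v_∞(μ) and which terminate at a uniform rate. -/
def Assumption3 (F : Set (SPExp Ω)) (v : Belief Ω → ℝ) (μ : Belief Ω) : Prop :=
  ∃ (nk : ℕ → ℕ) (Sk : ℕ → SeqP F μ),
    (∀ k, IsNStep (Sk k) (nk k)) ∧
    Tendsto (fun k => stepUtility v (Sk k) (nk k)) atTop (𝓝 (vInf F v μ)) ∧
    ∀ ε : ℝ, 0 < ε → ∃ N : ℕ, ∀ k, N ≤ nk k → 1 - ε ≤ termProb (Sk k) N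

/-- v̂: the concave closure of v (the value of unconstrained Bayesian persuasion). -/
def concaveClosure (v : Belief Ω → ℝ) (p : Belief Ω) : ℝ :=
  sSup {x : ℝ | ∃ e : SPExp Ω, e.sigma = p ∧ x = e.expect v}

/-- O is implementable for (μ, F). -/
def Implementable (F : Set (SPExp Ω)) (μ : Belief Ω) (O : Set (Belief Ω)) : Prop :=
  ∀ ε : ℝ, 0 < ε → ∃ (n : ℕ) (S : SeqP F μ), 1 - ε < massIn S O n

/-- S is a Markov sequential persuasion compatible with (μ, D, Z, ρ). -/
def MarkovCompatible (S : SeqP F μ) (D Z : Set (Belief Ω)) (ρ : Belief Ω → SPExp Ω) : Prop :=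
  ∀ ξ : Hist Ω,
    (lastBelief μ ξ ∈ D → S.next ξ = ρ (lastBelief μ ξ)) ∧
    (lastBelief μ ξ ∈ Z → S.next ξ = SPExp.triv (lastBelief μ ξ))

/-- The j-th child of vertex m at depth n of the infinite h-ary tree. -/
def treeChild {h n : ℕ} (m : Fin (h ^ n)) (j : Fin h) : Fin (h ^ (n + 1)) :=
  ⟨m.val * h + j.val, by
    have h1 : m.val + 1 ≤ h ^ n := m.isLt
    have h2 : j.val < h := j.isLt
    calc m.val * h + j.val < m.val * h + h := by omega
      _ = (m.val + 1) * h := by ring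
      _ ≤ h ^ n * h := Nat.mul_le_mul h1 le_rfl
      _ = h ^ (n + 1) := (pow_succ h n).symm⟩

/-- An h-branching sequential persuasion starting from μ. -/
structure HBranch (Ω : Type*) [Fintype Ω] (F : Set (SPExp Ω)) (h : ℕ) (μ : Belief Ω) where
  π : ∀ n : ℕ, Fin (h ^ n) → ℝ
  β : ∀ n : ℕ, Fin (h ^ n) → Belief Ω
  η : ∀ n : ℕ, Fin (h ^ n) → SPExp Ω
  π_nonneg : ∀ n m, 0 ≤ π n m
  π_sum : ∀ n : ℕ, ∑ m, π n m = 1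
  η_mem : ∀ n m, η n m ∈ F
  β_root : ∀ m, β 0 m = μ
  compat_sigma : ∀ n m, (η n m).sigma = β n m
  compat_tau : ∀ (n : ℕ) (m : Fin (h ^ n)), ∀ p ∈ (η n m).tau,
    ∃ j : Fin h, β (n + 1) (treeChild m j) = p
  consistent : ∀ (n : ℕ) (m : Fin (h ^ n)) (p : Belief Ω),
    (∑ j : Fin h, if β (n + 1) (treeChild m j) = p then π (n + 1) (treeChild m j) else 0)
      = π n m * (η n m).w p

/-- c' (at depth n + l) is a descendant of c (at depth n) in the h-ary tree. -/
def Descendant {h : ℕ} : {n : ℕ} → (l : ℕ) → Fin (h ^ n) → Fin (h ^ (n + l)) → Prop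
  | _, 0, c, c' => c = c'
  | _, l + 1, c, c' => ∃ c'' j, Descendant l c c'' ∧ c' = treeChild c'' j

namespace HBranch

variable {h : ℕ}

/-- B terminates after vertex m at depth n. -/
def TermAfter (B : HBranch Ω F h μ) (n : ℕ) (m : Fin (h ^ n)) : Prop :=
  B.η n m ∈ Trivials Ω ∧
  ∀ (l : ℕ) (c' : Fin (h ^ (n + l))), Descendant l m c' → 0 < B.π (n + l) c' →
    B.η (n + l) c' ∈ Trivials Ω

/-- Pr[B terminates after n steps]. -/
def termProb (B : HBranch Ω F h μ) (n : ℕ) : ℝ :=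
  ∑ m : Fin (h ^ n), if B.TermAfter n m then B.π n m else 0

end HBranch

/-- B represents the infinite sequential persuasion S (via maps r_n : C_n → Ξ_n). -/
def Represents (S : SeqP F μ) {h : ℕ} (B : HBranch Ω F h μ) : Prop :=
  ∃ r : ∀ n : ℕ, Fin (h ^ n) → Hist Ω,
    ∀ n : ℕ,
      (∀ c, r n c ∈ Hists S n) ∧
      (∀ ξ ∈ Hists S n, histProb ξ = ∑ c, if r n c = ξ then B.π n c else 0) ∧
      (∀ c, lastBelief μ (r n c) = B.β n c ∧ S.next (r n c) = B.η n c) ∧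
      (∀ l : ℕ, ∀ ξ ∈ Hists S n, ∀ ξ' ∈ Hists S (n + l),
        (ξ <:+ ξ' ↔
          ∀ c' : Fin (h ^ (n + l)), r (n + l) c' = ξ' →
            ∃ c : Fin (h ^ n), r n c = ξ ∧ Descendant l c c'))

/-- The number of nontrivial experiments taken along a history. -/
def nontrivCount (ξ : Hist Ω) : ℕ :=
  ξ.countP fun s => decide (s.1 ∉ Trivials Ω)

end

noncomputable section StepAuxSec
namespace StepAux
open Filter Topology
open scoped Classical

variable {Ω : Type*} [Fintype Ω]

def aOf {h : ℕ} (w : Belief Ω →₀ ℝ) (q : Fin h → Belief Ω) (j : Fin h) : ℝ :=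
  if ∀ j' < j, q j' ≠ q j then w (q j) else 0

lemma aOf_nonneg {h : ℕ} (e : SPExp Ω) (q : Fin h → Belief Ω) (j : Fin h) :
    0 ≤ aOf e.w q j := by
  unfold aOf; split
  · exact e.nonneg _
  · exact le_rfl

lemma w_le_one (e : SPExp Ω) (p : Belief Ω) : e.w p ≤ 1 := by
  by_cases hp : p ∈ e.w.support
  · calc e.w p ≤ ∑ p' ∈ e.w.support, e.w p' :=
        Finset.single_le_sum (fun p' _ => e.nonneg p') hp
      _ = 1 := e.sum_one
  · rw [Finsupp.notMem_support_iff.mp hp]; exact zero_le_one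

lemma aOf_le_one {h : ℕ} (e : SPExp Ω) (q : Fin h → Belief Ω) (j : Fin h) :
    aOf e.w q j ≤ 1 := by
  unfold aOf; split
  · exact w_le_one e _
  · exact zero_le_one

lemma decomp {h : ℕ} (w : Belief Ω →₀ ℝ) (q : Fin h → Belief Ω)
    (htau : ∀ p ∈ w.support, ∃ j, q j = p) :
    w = ∑ j, Finsupp.single (q j) (aOf w q j) := by
  ext p
  rw [Finsupp.finset_sum_apply]
  simp only [Finsupp.single_apply]
  by_cases hp : ∃ j, q j = p
  · set s := Finset.univ.filter (fun j : Fin h => q j = p) with hs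
    have hsne : s.Nonempty := by
      obtain ⟨j, hj⟩ := hp
      exact ⟨j, by simp [hs, hj]⟩
    set j0 := s.min' hsne with hj0def
    have hj0q : q j0 = p := by
      exact (Finset.mem_filter.mp (s.min'_mem hsne)).2
    have hmin : ∀ j' < j0, q j' ≠ q j0 := by
      intro j' hlt hcontra
      have hmem : j' ∈ s :=
        Finset.mem_filter.mpr ⟨Finset.mem_univ _, hcontra.trans hj0q⟩
      exact absurd (s.min'_le j' hmem) (not_le.mpr hlt)
    have hsum : (∑ j, if q j = p then aOf w q j else 0)
        = (if q j0 = p then aOf w q j0 else 0) := by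
      refine Finset.sum_eq_single j0 ?_ ?_
      · intro j _ hne
        by_cases hq : q j = p
        · rw [if_pos hq]
          have hlt : j0 < j := lt_of_le_of_ne
            (s.min'_le j (Finset.mem_filter.mpr ⟨Finset.mem_univ _, hq⟩))
            (Ne.symm hne)
          unfold aOf
          rw [if_neg]
          push_neg
          exact ⟨j0, hlt, hj0q.trans hq.symm⟩
        · rw [if_neg hq]
      · intro hj; exact absurd (Finset.mem_univ j0) hj
    rw [hsum, if_pos hj0q]
    unfold aOf
    rw [if_pos hmin, hj0q]
  · push_neg at hp
    have hw : w p = 0 := by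
      by_contra hw
      obtain ⟨j, hj⟩ := htau p (Finsupp.mem_support_iff.mpr hw)
      exact hp j hj
    rw [hw]
    exact (Finset.sum_eq_zero fun j _ => if_neg (hp j)).symm

lemma sum_singles_expect {h : ℕ} (q : Fin h → Belief Ω) (a : Fin h → ℝ) (f : Belief Ω → ℝ) :
    ∑ p ∈ (∑ j, Finsupp.single (q j) (a j)).support,
        (∑ j, Finsupp.single (q j) (a j)) p * f p
      = ∑ j, a j * f (q j) := by
  have key := Finsupp.sum_finset_sum_index (s := (Finset.univ : Finset (Fin h)))
    (g := fun j => Finsupp.single (q j) (a j)) (h := fun p x => x * f p)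
    (fun p => zero_mul _) (fun p b₁ b₂ => add_mul _ _ _)
  have lhs_eq : (∑ p ∈ (∑ j, Finsupp.single (q j) (a j)).support,
      (∑ j, Finsupp.single (q j) (a j)) p * f p)
      = (∑ j, Finsupp.single (q j) (a j)).sum (fun p x => x * f p) := rfl
  rw [lhs_eq, ← key]
  refine Finset.sum_congr rfl fun j _ => ?_
  exact Finsupp.sum_single_index (zero_mul _)

lemma tv_of_tendsto {ps : ℕ → Belief Ω} {p : Belief Ω}
    (hten : Tendsto ps atTop (𝓝 p)) : TVTendsto ps p := by
  have hcoord : ∀ ω, Tendsto (fun k => (ps k).val ω) atTop (𝓝 (p.val ω)) := fun ω =>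
    (((continuous_apply ω).comp continuous_subtype_val).tendsto p).comp hten
  have h0 := tendsto_finset_sum (Finset.univ : Finset Ω)
    (fun ω _ => ((hcoord ω).sub (tendsto_const_nhds (x := p.val ω))).abs)
  simpa [TVTendsto] using h0

lemma coord_of_tv {ps : ℕ → Belief Ω} {p : Belief Ω} (htv : TVTendsto ps p) (ω : Ω) :
    Tendsto (fun k => (ps k).val ω) atTop (𝓝 (p.val ω)) := by
  have h0 : Tendsto (fun k => |(ps k).val ω - p.val ω|) atTop (𝓝 0) :=
    squeeze_zero (fun k => abs_nonneg _)
      (fun k => Finset.single_le_sum (f := fun ω' => |(ps k).val ω' - p.val ω'|)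
        (fun ω' _ => abs_nonneg _) (Finset.mem_univ ω)) htv
  rw [tendsto_iff_dist_tendsto_zero]
  simpa [Real.dist_eq] using h0

lemma pi_child_zero {F : Set (SPExp Ω)} {μ : Belief Ω} {h : ℕ} (B : HBranch Ω F h μ)
    (n : ℕ) (m : Fin (h ^ n)) (j : Fin h)
    (hw : (B.η n m).w (B.β (n + 1) (treeChild m j)) = 0) :
    B.π (n + 1) (treeChild m j) = 0 := by
  have hcons := B.consistent n m (B.β (n + 1) (treeChild m j))
  rw [hw, mul_zero] at hcons
  have hnn : ∀ j' ∈ (Finset.univ : Finset (Fin h)),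
      0 ≤ (if B.β (n + 1) (treeChild m j') = B.β (n + 1) (treeChild m j)
        then B.π (n + 1) (treeChild m j') else 0) := by
    intro j' _
    split
    · exact B.π_nonneg _ _
    · exact le_rfl
  have := (Finset.sum_eq_zero_iff_of_nonneg hnn).mp hcons j (Finset.mem_univ j)
  simpa using this

lemma hbranch_test {F : Set (SPExp Ω)} {μ : Belief Ω} {h : ℕ} (B : HBranch Ω F h μ)
    (n : ℕ) (m : Fin (h ^ n)) (f : Belief Ω → ℝ) :
    ∑ j : Fin h, f (B.β (n + 1) (treeChild m j)) * B.π (n + 1) (treeChild m j)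
      = B.π n m * (B.η n m).expect f := by
  have hR : B.π n m * (B.η n m).expect f
      = ∑ j : Fin h, f (B.β (n + 1) (treeChild m j)) * B.π (n + 1) (treeChild m j) := by
    rw [SPExp.expect, Finset.mul_sum]
    have step1 : ∀ p ∈ (B.η n m).w.support,
        B.π n m * ((B.η n m).w p * f p)
          = ∑ j : Fin h, (if B.β (n + 1) (treeChild m j) = p
              then B.π (n + 1) (treeChild m j) * f p else 0) := by
      intro p _
      rw [← mul_assoc, ← B.consistent n m p, Finset.sum_mul]
      refine Finset.sum_congr rfl fun j _ => ?_
      split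
      · rfl
      · rw [zero_mul]
    rw [Finset.sum_congr rfl step1, Finset.sum_comm]
    refine Finset.sum_congr rfl fun j _ => ?_
    rw [Finset.sum_ite_eq]
    by_cases hmem : B.β (n + 1) (treeChild m j) ∈ (B.η n m).w.support
    · rw [if_pos hmem, mul_comm]
    · rw [if_neg hmem, pi_child_zero B n m j (Finsupp.notMem_support_iff.mp hmem), mul_zero]
  exact hR.symm

instance beliefCompact : CompactSpace (Belief Ω) := by
  have hset : {p : Ω → ℝ | (∀ ω, 0 ≤ p ω) ∧ ∑ ω, p ω = 1}
      = (⋂ ω, {p : Ω → ℝ | 0 ≤ p ω}) ∩ {p : Ω → ℝ | ∑ ω, p ω = 1} := by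
    ext p; simp [Set.mem_iInter]
  have hclosed : IsClosed {p : Ω → ℝ | (∀ ω, 0 ≤ p ω) ∧ ∑ ω, p ω = 1} := by
    rw [hset]
    exact IsClosed.inter
      (isClosed_iInter fun ω => isClosed_le continuous_const (continuous_apply ω))
      (isClosed_eq (continuous_finset_sum _ fun ω _ => continuous_apply ω) continuous_const)
  have hsub : {p : Ω → ℝ | (∀ ω, 0 ≤ p ω) ∧ ∑ ω, p ω = 1} ⊆ Set.Icc 0 1 := by
    intro p hp
    constructor
    · exact fun ω => hp.1 ω
    · intro ω
      calc p ω ≤ ∑ ω', p ω' :=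
          Finset.single_le_sum (fun ω' _ => hp.1 ω') (Finset.mem_univ ω)
        _ = 1 := hp.2
  have hcpt : IsCompact {p : Ω → ℝ | (∀ ω, 0 ≤ p ω) ∧ ∑ ω, p ω = 1} :=
    IsCompact.of_isClosed_subset isCompact_Icc hclosed hsub
  exact isCompact_iff_compactSpace.mp hcpt

end StepAux
end StepAuxSec
/-- Lemma 10 (lem-step-converge): one-step extension of the convergence of a sequence of
h-branching sequential persuasions, along a subsequence. -/
theorem lem_step_converge {Ω : Type*} [Fintype Ω] [Nonempty Ω]
    (F : Set (SPExp Ω)) (hTF : Trivials Ω ⊆ F)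
    (h : ℕ) (hA1 : Assumption1 F h) (μ : Belief Ω) (n : ℕ)
    (B : ℕ → HBranch Ω F h μ)
    (ηlim : ∀ i : ℕ, Fin (h ^ i) → SPExp Ω)
    (πlim : ∀ i : ℕ, Fin (h ^ i) → ℝ)
    (βlim : ∀ i : ℕ, Fin (h ^ i) → Belief Ω)
    (hη : ∀ i < n, ∀ m, ηlim i m ∈ F ∧ WeakTendsto (fun k => (B k).η i m) (ηlim i m))
    (hπ : ∀ i ≤ n, ∀ m,
      Filter.Tendsto (fun k => (B k).π i m) Filter.atTop (nhds (πlim i m)))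
    (hβ : ∀ i ≤ n, ∀ m, TVTendsto (fun k => (B k).β i m) (βlim i m)) :
    ∃ φ : ℕ → ℕ, StrictMono φ ∧
    ∃ (ηn : Fin (h ^ n) → SPExp Ω) (πn1 : Fin (h ^ (n + 1)) → ℝ)
      (βn1 : Fin (h ^ (n + 1)) → Belief Ω),
      (∀ m, ηn m ∈ F) ∧
      (∀ m, WeakTendsto (fun l => (B (φ l)).η n m) (ηn m)) ∧
      (∀ c, Filter.Tendsto (fun l => (B (φ l)).π (n + 1) c) Filter.atTop (nhds (πn1 c))) ∧
      (∀ c, 0 ≤ πn1 c) ∧ (∑ c, πn1 c = 1) ∧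
      (∀ c, TVTendsto (fun l => (B (φ l)).β (n + 1) c) (βn1 c)) ∧
      (∀ m, SPExp.sigma (ηn m) = βlim n m) ∧
      (∀ m, ∀ p ∈ SPExp.tau (ηn m), ∃ j : Fin h, βn1 (treeChild m j) = p) ∧
      (∀ (m : Fin (h ^ n)) (p : Belief Ω),
        (∑ j : Fin h, if βn1 (treeChild m j) = p then πn1 (treeChild m j) else 0)
          = πlim n m * (ηn m).w p) := by
  classical
  -- per-k decomposition data
  set q : ℕ → Fin (h ^ n) → Fin h → Belief Ω :=
    fun k m j => (B k).β (n + 1) (treeChild m j) with hqdef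
  set a : ℕ → Fin (h ^ n) → Fin h → ℝ :=
    fun k m j => StepAux.aOf ((B k).η n m).w (q k m) j with hadef
  have hdec : ∀ k m, ((B k).η n m).w = ∑ j, Finsupp.single (q k m j) (a k m j) :=
    fun k m => StepAux.decomp _ _ (fun p hp => (B k).compat_tau n m p hp)
  have hexp : ∀ k m (f : Belief Ω → ℝ),
      ((B k).η n m).expect f = ∑ j, a k m j * f (q k m j) := by
    intro k m f
    simp only [SPExp.expect]
    conv_lhs => rw [hdec k m]
    exact StepAux.sum_singles_expect _ _ f
  have hπmem : ∀ k c, (B k).π (n + 1) c ∈ Set.Icc (0 : ℝ) 1 := by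
    intro k c
    refine ⟨(B k).π_nonneg _ _, ?_⟩
    calc (B k).π (n + 1) c ≤ ∑ c', (B k).π (n + 1) c' :=
        Finset.single_le_sum (f := fun c' => (B k).π (n + 1) c')
          (fun c' _ => (B k).π_nonneg _ _) (Finset.mem_univ c)
      _ = 1 := (B k).π_sum (n + 1)
  have hamem : ∀ k m j, a k m j ∈ Set.Icc (0 : ℝ) 1 :=
    fun k m j => ⟨StepAux.aOf_nonneg ((B k).η n m) _ _, StepAux.aOf_le_one ((B k).η n m) _ _⟩
  -- compactness extraction
  let X := ((Fin (h ^ (n + 1)) → Set.Icc (0 : ℝ) 1) × (Fin (h ^ (n + 1)) → Belief Ω) ×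
    (Fin (h ^ n) → Fin h → Set.Icc (0 : ℝ) 1))
  let x : ℕ → X := fun k =>
    ⟨fun c => ⟨(B k).π (n + 1) c, hπmem k c⟩, fun c => (B k).β (n + 1) c,
     fun m j => ⟨a k m j, hamem k m j⟩⟩
  obtain ⟨L, -, φ, hφ, hLx⟩ :=
    IsCompact.tendsto_subseq (x := x) isCompact_univ (fun k => Set.mem_univ _)
  -- component limits
  have hπc : ∀ c, Filter.Tendsto (fun l => (B (φ l)).π (n + 1) c)
      Filter.atTop (𝓝 ((L.1 c : ℝ))) := by
    intro c
    have hcont : Continuous fun y : X => ((y.1 c : ℝ)) :=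
      continuous_subtype_val.comp ((continuous_apply c).comp continuous_fst)
    exact (hcont.tendsto L).comp hLx
  have hβc : ∀ c, Filter.Tendsto (fun l => (B (φ l)).β (n + 1) c)
      Filter.atTop (𝓝 (L.2.1 c)) := by
    intro c
    have hcont : Continuous fun y : X => y.2.1 c :=
      (continuous_apply c).comp (continuous_fst.comp continuous_snd)
    exact (hcont.tendsto L).comp hLx
  have hac : ∀ m j, Filter.Tendsto (fun l => a (φ l) m j)
      Filter.atTop (𝓝 ((L.2.2 m j : ℝ))) := by
    intro m j
    have hcont : Continuous fun y : X => ((y.2.2 m j : ℝ)) :=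
      continuous_subtype_val.comp
        ((continuous_apply j).comp ((continuous_apply m).comp (continuous_snd.comp continuous_snd)))
    exact (hcont.tendsto L).comp hLx
  set πn1 : Fin (h ^ (n + 1)) → ℝ := fun c => (L.1 c : ℝ) with hπn1def
  set βn1 : Fin (h ^ (n + 1)) → Belief Ω := L.2.1 with hβn1def
  set alim : Fin (h ^ n) → Fin h → ℝ := fun m j => (L.2.2 m j : ℝ) with halimdef
  -- sums of a
  have hasum : ∀ k m, ∑ j, a k m j = 1 := by
    intro k m
    have h1 : ((B k).η n m).expect (fun _ => 1) = 1 := by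
      simp only [SPExp.expect, mul_one]
      exact ((B k).η n m).sum_one
    calc ∑ j, a k m j = ∑ j, a k m j * 1 := by simp
      _ = ((B k).η n m).expect (fun _ => 1) := (hexp k m (fun _ => (1:ℝ))).symm
      _ = 1 := h1
  have halimsum : ∀ m, ∑ j, alim m j = 1 := by
    intro m
    have h1 : Filter.Tendsto (fun l => ∑ j, a (φ l) m j)
        Filter.atTop (𝓝 (∑ j, alim m j)) :=
      tendsto_finset_sum _ (fun j _ => hac m j)
    have h2 : Filter.Tendsto (fun l => ∑ j, a (φ l) m j) Filter.atTop (𝓝 1) :=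
      Filter.Tendsto.congr (fun l => (hasum (φ l) m).symm) tendsto_const_nhds
    exact tendsto_nhds_unique h1 h2
  -- the limit experiments
  have hWnn : ∀ (m : Fin (h ^ n)) (p : Belief Ω),
      0 ≤ (∑ j, Finsupp.single (βn1 (treeChild m j)) (alim m j)) p := by
    intro m p
    rw [Finsupp.finset_sum_apply]
    refine Finset.sum_nonneg fun j _ => ?_
    rw [Finsupp.single_apply]
    split
    · exact (L.2.2 m j).2.1
    · exact le_rfl
  have hWsum : ∀ m : Fin (h ^ n),
      ∑ p ∈ (∑ j, Finsupp.single (βn1 (treeChild m j)) (alim m j)).support,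
        (∑ j, Finsupp.single (βn1 (treeChild m j)) (alim m j)) p = 1 := by
    intro m
    have := StepAux.sum_singles_expect (fun j => βn1 (treeChild m j)) (alim m) (fun _ => 1)
    simp only [mul_one] at this
    rw [this]
    exact halimsum m
  set ηn : Fin (h ^ n) → SPExp Ω := fun m =>
    ⟨∑ j, Finsupp.single (βn1 (treeChild m j)) (alim m j), hWnn m, hWsum m⟩ with hηndef
  have hηw : ∀ m, (ηn m).w = ∑ j, Finsupp.single (βn1 (treeChild m j)) (alim m j) :=
    fun m => rfl
  have hηexp : ∀ m (f : Belief Ω → ℝ),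
      (ηn m).expect f = ∑ j, alim m j * f (βn1 (treeChild m j)) := by
    intro m f
    simp only [SPExp.expect, hηw]
    exact StepAux.sum_singles_expect _ _ f
  -- weak convergence to ηn
  have hweak : ∀ m, WeakTendsto (fun l => (B (φ l)).η n m) (ηn m) := by
    intro m f hf
    rw [hηexp m f]
    refine Filter.Tendsto.congr (fun l => (hexp (φ l) m f).symm) ?_
    exact tendsto_finset_sum _ fun j _ =>
      (hac m j).mul ((hf.tendsto (βn1 (treeChild m j))).comp (hβc (treeChild m j)))
  have hηF : ∀ m, ηn m ∈ F :=
    fun m => hA1.2 _ (fun l => (B (φ l)).η_mem n m) _ (hweak m)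
  -- π limit properties
  have hπnn : ∀ c, 0 ≤ πn1 c := fun c => (L.1 c).2.1
  have hπsum : ∑ c, πn1 c = 1 := by
    have h1 : Filter.Tendsto (fun l => ∑ c, (B (φ l)).π (n + 1) c)
        Filter.atTop (𝓝 (∑ c, πn1 c)) :=
      tendsto_finset_sum _ fun c _ => hπc c
    have h2 : Filter.Tendsto (fun l => ∑ c, (B (φ l)).π (n + 1) c) Filter.atTop (𝓝 1) :=
      Filter.Tendsto.congr (fun l => ((B (φ l)).π_sum (n + 1)).symm) tendsto_const_nhds
    exact tendsto_nhds_unique h1 h2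
  have hβtv : ∀ c, TVTendsto (fun l => (B (φ l)).β (n + 1) c) (βn1 c) :=
    fun c => StepAux.tv_of_tendsto (hβc c)
  -- sigma compatibility
  have hsigma : ∀ m, SPExp.sigma (ηn m) = βlim n m := by
    intro m
    apply Subtype.ext; funext ω
    have hf : Continuous (fun p : Belief Ω => p.val ω) :=
      (continuous_apply ω).comp continuous_subtype_val
    have h1 := hweak m _ hf
    have h2 : ∀ l, ((B (φ l)).η n m).expect (fun p => p.val ω)
        = ((B (φ l)).β n m).val ω := by
      intro l
      have hc := (B (φ l)).compat_sigma n m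
      calc ((B (φ l)).η n m).expect (fun p => p.val ω)
          = (((B (φ l)).η n m).sigma).val ω := rfl
        _ = ((B (φ l)).β n m).val ω := by rw [hc]
    have h3 : Filter.Tendsto (fun l => ((B (φ l)).β n m).val ω)
        Filter.atTop (𝓝 ((βlim n m).val ω)) :=
      (StepAux.coord_of_tv (hβ n le_rfl m) ω).comp hφ.tendsto_atTop
    have h4 : Filter.Tendsto (fun l => ((B (φ l)).β n m).val ω)
        Filter.atTop (𝓝 ((ηn m).expect fun p => p.val ω)) :=
      Filter.Tendsto.congr (fun l => h2 l) h1
    have h5 := tendsto_nhds_unique h4 h3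
    calc (SPExp.sigma (ηn m)).val ω = (ηn m).expect (fun p => p.val ω) := rfl
      _ = (βlim n m).val ω := h5
  -- tau compatibility
  have htau : ∀ m, ∀ p ∈ SPExp.tau (ηn m), ∃ j : Fin h, βn1 (treeChild m j) = p := by
    intro m p hp
    have hw : (ηn m).w p ≠ 0 := Finsupp.mem_support_iff.mp hp
    have hw2 : (∑ j, (Finsupp.single (βn1 (treeChild m j)) (alim m j)) p) ≠ 0 := by
      rw [← Finsupp.finset_sum_apply]; exact hw
    obtain ⟨j, -, hj⟩ := Finset.exists_ne_zero_of_sum_ne_zero hw2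
    refine ⟨j, ?_⟩
    by_contra hne
    rw [Finsupp.single_apply, if_neg hne] at hj
    exact hj rfl
  -- test-function identity in the limit
  have htest : ∀ (m : Fin (h ^ n)) (f : Belief Ω → ℝ), Continuous f →
      (∑ j : Fin h, f (βn1 (treeChild m j)) * πn1 (treeChild m j))
        = πlim n m * (ηn m).expect f := by
    intro m f hf
    have hL1 : Filter.Tendsto
        (fun l => ∑ j : Fin h, f (q (φ l) m j) * (B (φ l)).π (n + 1) (treeChild m j))
        Filter.atTop (𝓝 (∑ j : Fin h, f (βn1 (treeChild m j)) * πn1 (treeChild m j))) :=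
      tendsto_finset_sum _ fun j _ =>
        ((hf.tendsto (βn1 (treeChild m j))).comp (hβc (treeChild m j))).mul
          (hπc (treeChild m j))
    have hR1 : Filter.Tendsto
        (fun l => (B (φ l)).π n m * ((B (φ l)).η n m).expect f)
        Filter.atTop (𝓝 (πlim n m * (ηn m).expect f)) :=
      (((hπ n le_rfl m).comp hφ.tendsto_atTop)).mul (hweak m f hf)
    have heq : ∀ l,
        (∑ j : Fin h, f (q (φ l) m j) * (B (φ l)).π (n + 1) (treeChild m j))
          = (B (φ l)).π n m * ((B (φ l)).η n m).expect f :=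
      fun l => StepAux.hbranch_test (B (φ l)) n m f
    exact tendsto_nhds_unique (hL1.congr heq) hR1
  -- consistency in the limit, via bump functions
  have hcons : ∀ (m : Fin (h ^ n)) (p : Belief Ω),
      (∑ j : Fin h, if βn1 (treeChild m j) = p then πn1 (treeChild m j) else 0)
        = πlim n m * (ηn m).w p := by
    intro m p
    set s := Finset.univ.filter (fun j : Fin h => βn1 (treeChild m j) ≠ p) with hs
    set ε : ℝ := if hsne : s.Nonempty
      then (s.image fun j => dist (βn1 (treeChild m j)) p).min' (hsne.image _) else 1 with hε
    have hεpos : 0 < ε := by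
      rw [hε]
      split
      · next hsne =>
        have hmem := (s.image fun j => dist (βn1 (treeChild m j)) p).min'_mem (hsne.image _)
        rw [Finset.mem_image] at hmem
        obtain ⟨j, hj, hjeq⟩ := hmem
        rw [← hjeq]
        exact dist_pos.mpr (Finset.mem_filter.mp hj).2
      · exact one_pos
    have hεle : ∀ j : Fin h, βn1 (treeChild m j) ≠ p → ε ≤ dist (βn1 (treeChild m j)) p := by
      intro j hj
      have hsne : s.Nonempty := ⟨j, Finset.mem_filter.mpr ⟨Finset.mem_univ _, hj⟩⟩
      rw [hε, dif_pos hsne]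
      exact Finset.min'_le _ _
        (Finset.mem_image_of_mem (fun j => dist (βn1 (treeChild m j)) p)
          (Finset.mem_filter.mpr ⟨Finset.mem_univ _, hj⟩))
    set f : Belief Ω → ℝ := fun x => max 0 (1 - dist x p / ε) with hfdef
    have hfc : Continuous f :=
      continuous_const.max
        (continuous_const.sub ((continuous_id.dist continuous_const).div_const ε))
    have hfp : f p = 1 := by
      simp [hfdef]
    have hf0 : ∀ j, βn1 (treeChild m j) ≠ p → f (βn1 (treeChild m j)) = 0 := by
      intro j hj
      have h1 : (1 : ℝ) ≤ dist (βn1 (treeChild m j)) p / ε :=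
        (one_le_div hεpos).mpr (hεle j hj)
      simp only [hfdef]
      rw [max_eq_left (by linarith)]
    have e1 : (∑ j : Fin h, if βn1 (treeChild m j) = p then πn1 (treeChild m j) else 0)
        = ∑ j : Fin h, f (βn1 (treeChild m j)) * πn1 (treeChild m j) := by
      refine Finset.sum_congr rfl fun j _ => ?_
      by_cases hqj : βn1 (treeChild m j) = p
      · rw [if_pos hqj, hqj, hfp, one_mul]
      · rw [if_neg hqj, hf0 j hqj, zero_mul]
    have e2 : (ηn m).expect f = (ηn m).w p := by
      rw [hηexp m f]
      have hwp : (ηn m).w p = ∑ j : Fin h, if βn1 (treeChild m j) = p then alim m j else 0 := by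
        have h1 : (ηn m).w p
            = ∑ j, (Finsupp.single (βn1 (treeChild m j)) (alim m j)) p := by
          rw [← Finsupp.finset_sum_apply]
        rw [h1]
        exact Finset.sum_congr rfl fun j _ => Finsupp.single_apply
      rw [hwp]
      refine Finset.sum_congr rfl fun j _ => ?_
      by_cases hqj : βn1 (treeChild m j) = p
      · rw [if_pos hqj, hqj, hfp, mul_one]
      · rw [if_neg hqj, hf0 j hqj, mul_zero]
    rw [e1, htest m f hfc, e2]
  exact ⟨φ, hφ, ηn, πn1, βn1, hηF, hweak, hπc, hπnn, hπsum, hβtv, hsigma, htau, hcons⟩
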